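/- κ̂(1) = 0, and μ·κ̂(μ) is asymptotically equivalent to log μ as μ → ∞, i.e., lim_{μ→∞} μ·κ̂(μ) / log μ = 1. -/

import Mathlib

open Filter

/-- The variational functional `f_μ(δ,ε)` (convention `0 log 0 = 0`, automatic
since `Real.log 0 = 0`). -/
noncomputable def fmu (μ : ℝ) (p : ℝ × ℝ) : ℝ :=
  -2 * p.1 * Real.log p.1 - 2 * p.2 * Real.log p.2
    - (1 - p.1 - p.2) * Real.log (1 - p.1 - p.2)
    - ((μ - 1) / 2 - p.1) * Real.log ((μ - 1) / 2 - p.1)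
    - ((μ - 1) / 2 - p.2) * Real.log ((μ - 1) / 2 - p.2)
    + (μ - 1) * Real.log ((μ - 1) / 2)

/-- The domain `D_μ` of `f_μ`. -/
def Dmu (μ : ℝ) : Set (ℝ × ℝ) :=
  {p | 0 ≤ p.1 ∧ 0 ≤ p.2 ∧ p.1 + p.2 ≤ 1 ∧ p.1 ≤ (μ - 1) / 2 ∧ p.2 ≤ (μ - 1) / 2}

/-- The interface entropy per step `κ̂(μ) = (1/μ) · sup_{(δ,ε) ∈ D_μ} f_μ(δ,ε)`. -/
noncomputable def kappaHat (μ : ℝ) : ℝ := (1 / μ) * sSup (fmu μ '' Dmu μ)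

lemma neg_mul_log_le_one {x : ℝ} (hx : 0 ≤ x) : -(x * Real.log x) ≤ 1 := by
  rcases eq_or_lt_of_le hx with h | h
  · simp [← h]
  · have h1 : Real.log x⁻¹ ≤ x⁻¹ - 1 := Real.log_le_sub_one_of_pos (by positivity)
    rw [Real.log_inv] at h1
    have h2 := mul_le_mul_of_nonneg_left h1 h.le
    have h3 : x * x⁻¹ = 1 := mul_inv_cancel₀ h.ne'
    nlinarith

lemma g_bound {m δ : ℝ} (hm : 2 ≤ m) (h0 : 0 ≤ δ) (h1 : δ ≤ 1) :
    m * Real.log m - (m - δ) * Real.log (m - δ) ≤ δ * (Real.log m + 1) := by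
  have hmδ : 0 < m - δ := by linarith
  have hm0 : 0 < m := by linarith
  have hlog := Real.log_le_sub_one_of_pos (show (0:ℝ) < m / (m - δ) by positivity)
  rw [Real.log_div hm0.ne' hmδ.ne'] at hlog
  have h2 : m / (m - δ) - 1 = δ / (m - δ) := by field_simp; ring
  rw [h2] at hlog
  have h3 : (m - δ) * (Real.log m - Real.log (m - δ)) ≤ (m - δ) * (δ / (m - δ)) :=
    mul_le_mul_of_nonneg_left hlog hmδ.le
  have h4 : (m - δ) * (δ / (m - δ)) = δ := by field_simp
  rw [h4] at h3
  nlinarith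

lemma fmu_upper {μ : ℝ} (hμ : 5 ≤ μ) {p : ℝ × ℝ} (hp : p ∈ Dmu μ) :
    fmu μ p ≤ Real.log ((μ - 1) / 2) + 6 := by
  obtain ⟨h1, h2, h3, h4, h5⟩ := hp
  have hm : (2:ℝ) ≤ (μ - 1) / 2 := by linarith
  have e1 := neg_mul_log_le_one h1
  have e2 := neg_mul_log_le_one h2
  have e3 := neg_mul_log_le_one (show (0:ℝ) ≤ 1 - p.1 - p.2 by linarith)
  have gb1 := g_bound hm h1 (by linarith : p.1 ≤ 1)
  have gb2 := g_bound hm h2 (by linarith : p.2 ≤ 1)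
  have hL : 0 ≤ Real.log ((μ - 1) / 2) := Real.log_nonneg (by linarith)
  have key : p.1 * (Real.log ((μ - 1) / 2) + 1) + p.2 * (Real.log ((μ - 1) / 2) + 1)
      ≤ Real.log ((μ - 1) / 2) + 1 := by nlinarith
  unfold fmu
  nlinarith [gb1, gb2, key, e1, e2, e3]

lemma fmu_lower {μ : ℝ} (hμ : 5 ≤ μ) :
    Real.log ((μ - 3) / 2) ≤ fmu μ ((1:ℝ), (0:ℝ)) := by
  have hm1 : (0:ℝ) < (μ - 1) / 2 := by linarith
  have hm3 : (0:ℝ) < (μ - 3) / 2 := by linarith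
  have hval : fmu μ ((1:ℝ), (0:ℝ))
      = (μ - 1) / 2 * Real.log ((μ - 1) / 2) - ((μ - 1) / 2 - 1) * Real.log ((μ - 1) / 2 - 1) := by
    simp [fmu, Real.log_one, Real.log_zero]
    ring
  have h13 : (μ - 1) / 2 - 1 = (μ - 3) / 2 := by ring
  rw [hval, h13]
  have hlm : Real.log ((μ - 3) / 2) ≤ Real.log ((μ - 1) / 2) :=
    Real.log_le_log hm3 (by linarith)
  nlinarith

lemma mem_Dmu {μ : ℝ} (hμ : 5 ≤ μ) : ((1:ℝ), (0:ℝ)) ∈ Dmu μ := by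
  refine ⟨by norm_num, le_refl _, by norm_num, by simp; linarith, by simp; linarith⟩

lemma ratio_limit (b c : ℝ) :
    Tendsto (fun μ : ℝ => (Real.log ((μ + b) / 2) + c) / Real.log μ) atTop (nhds 1) := by
  have hnum : Tendsto (fun μ : ℝ => Real.log ((μ + b) / 2) + c - Real.log μ) atTop
      (nhds (Real.log (1 / 2) + c)) := by
    have hb : Tendsto (fun μ : ℝ => b / μ) atTop (nhds 0) :=
      tendsto_const_nhds.div_atTop tendsto_id
    have harg : Tendsto (fun μ : ℝ => (1 + b / μ) / 2) atTop (nhds (1 / 2)) := by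
      have h := ((tendsto_const_nhds (x := (1:ℝ))).add hb).div_const (2:ℝ)
      simpa using h
    have hlog : Tendsto (fun μ : ℝ => Real.log ((1 + b / μ) / 2)) atTop (nhds (Real.log (1 / 2))) :=
      ((Real.continuousAt_log (by norm_num)).tendsto.comp harg)
    have heq : ∀ᶠ μ : ℝ in atTop,
        Real.log ((1 + b / μ) / 2) + c = Real.log ((μ + b) / 2) + c - Real.log μ := by
      filter_upwards [eventually_gt_atTop (max 0 (-b))] with μ hμ
      have hμ0 : (0:ℝ) < μ := lt_of_le_of_lt (le_max_left _ _) hμ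
      have hμb : (0:ℝ) < μ + b := by
        have := lt_of_le_of_lt (le_max_right 0 (-b)) hμ; linarith
      have harg2 : (1 + b / μ) / 2 = ((μ + b) / 2) / μ := by
        rw [div_div]
        rw [div_eq_div_iff (by norm_num) (by positivity)]
        field_simp
      rw [harg2, Real.log_div (by positivity) hμ0.ne']
      ring
    exact (hlog.add tendsto_const_nhds).congr' heq
  have hinv : Tendsto (fun μ : ℝ => (Real.log μ)⁻¹) atTop (nhds 0) :=
    Real.tendsto_log_atTop.inv_tendsto_atTop
  have hprod := hnum.mul hinv
  rw [mul_zero] at hprod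
  have hsum := (tendsto_const_nhds (x := (1:ℝ))).add hprod
  rw [add_zero] at hsum
  refine hsum.congr' ?_
  filter_upwards [eventually_gt_atTop (1:ℝ)] with μ hμ
  have hlμ : Real.log μ ≠ 0 := (Real.log_pos hμ).ne'
  field_simp
  ring

/-- `κ̂(1) = 0`, and `μ·κ̂(μ) ∼ log μ` as `μ → ∞`. -/
theorem stmt9 :
    kappaHat 1 = 0 ∧
    Tendsto (fun μ : ℝ => μ * kappaHat μ / Real.log μ) atTop (nhds 1) := by
  constructor
  · have hD : Dmu 1 = {((0:ℝ), (0:ℝ))} := by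
      ext p
      simp only [Dmu, Set.mem_setOf_eq, Set.mem_singleton_iff, Prod.ext_iff]
      constructor
      · rintro ⟨a, b, c, d, e⟩
        norm_num at d e
        exact ⟨le_antisymm d a, le_antisymm e b⟩
      · rintro ⟨h1, h2⟩
        rw [h1, h2]
        norm_num
    have hf : fmu 1 ((0:ℝ), (0:ℝ)) = 0 := by
      simp [fmu, Real.log_zero, Real.log_one]
    rw [kappaHat, hD, Set.image_singleton, hf, csSup_singleton]
    ring
  · have hL := ratio_limit (-3) 0
    have hU := ratio_limit (-1) 6
    refine tendsto_of_tendsto_of_tendsto_of_le_of_le' hL hU ?_ ?_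
    · filter_upwards [eventually_ge_atTop (5:ℝ)] with μ hμ
      have hμ0 : (0:ℝ) < μ := by linarith
      have hlog : 0 < Real.log μ := Real.log_pos (by linarith)
      have hBdd : BddAbove (fmu μ '' Dmu μ) := by
        refine ⟨Real.log ((μ - 1) / 2) + 6, ?_⟩
        rintro y ⟨p, hp, rfl⟩
        exact fmu_upper hμ hp
      have hSl : Real.log ((μ - 3) / 2) ≤ sSup (fmu μ '' Dmu μ) :=
        le_trans (fmu_lower hμ) (le_csSup hBdd ⟨_, mem_Dmu hμ, rfl⟩)
      have hk : μ * kappaHat μ = sSup (fmu μ '' Dmu μ) := by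
        rw [kappaHat]; field_simp
      rw [hk]
      have h1 : μ + (-3) = μ - 3 := by ring
      rw [h1, add_zero]
      exact div_le_div_of_nonneg_right hSl hlog.le
    · filter_upwards [eventually_ge_atTop (5:ℝ)] with μ hμ
      have hμ0 : (0:ℝ) < μ := by linarith
      have hlog : 0 < Real.log μ := Real.log_pos (by linarith)
      have hBdd : BddAbove (fmu μ '' Dmu μ) := by
        refine ⟨Real.log ((μ - 1) / 2) + 6, ?_⟩
        rintro y ⟨p, hp, rfl⟩
        exact fmu_upper hμ hp
      have hne : (fmu μ '' Dmu μ).Nonempty := ⟨_, _, mem_Dmu hμ, rfl⟩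
      have hSu : sSup (fmu μ '' Dmu μ) ≤ Real.log ((μ - 1) / 2) + 6 := by
        refine csSup_le hne ?_
        rintro y ⟨p, hp, rfl⟩
        exact fmu_upper hμ hp
      have hk : μ * kappaHat μ = sSup (fmu μ '' Dmu μ) := by
        rw [kappaHat]; field_simp
      rw [hk]
      have h1 : μ + (-1) = μ - 1 := by ring
      rw [h1]
      exact div_le_div_of_nonneg_right hSu hlog.le
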